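/- The function q is integrable over ℝ, i.e. ∫_{-∞}^{∞} q(s) ds < ∞. -/

import Mathlib

open MeasureTheory Filter Real Set Topology

lemma barrier_le {f f' : ℝ → ℝ} {s₀ : ℝ}
    (hd : ∀ s, s₀ ≤ s → HasDerivAt f (f' s) s)
    (h0 : f s₀ ≤ 0)
    (hb : ∀ t, s₀ ≤ t → f t = 0 → f' t < 0) :
    ∀ s, s₀ ≤ s → f s ≤ 0 := by
  intro s hs
  by_contra hfs
  push_neg at hfs
  set S : Set ℝ := {r | r ∈ Icc s₀ s ∧ f r ≤ 0} with hS
  have hcont : ContinuousOn f (Icc s₀ s) := fun x hx =>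
    (hd x hx.1).continuousAt.continuousWithinAt
  have hSne : S.Nonempty := ⟨s₀, ⟨le_refl _, hs⟩, h0⟩
  have hSbdd : BddAbove S := ⟨s, fun r hr => hr.1.2⟩
  have hSclosed : IsClosed S := by
    have := hcont.preimage_isClosed_of_isClosed isClosed_Icc (isClosed_Iic (a := (0:ℝ)))
    simpa [hS, Set.inter_def, Set.preimage, mem_Iic] using this
  set t := sSup S with ht
  have htS : t ∈ S := hSclosed.csSup_mem hSne hSbdd
  have hts : t ≤ s := htS.1.2
  have hs₀t : s₀ ≤ t := htS.1.1
  have hft : f t ≤ 0 := htS.2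
  have htlt : t < s := hts.lt_of_ne (fun h => by rw [h] at hft; linarith)
  have hgt : ∀ r ∈ Ioc t s, 0 < f r := by
    intro r hr
    by_contra h
    push_neg at h
    have : r ∈ S := ⟨⟨hs₀t.trans hr.1.le, hr.2⟩, h⟩
    exact absurd (le_csSup hSbdd this) (not_le.2 hr.1)
  have hne : (𝓝[Ioc t s] t).NeBot := by
    rw [← mem_closure_iff_nhdsWithin_neBot, closure_Ioc htlt.ne]
    exact ⟨le_refl _, htlt.le⟩
  have hge : 0 ≤ f t := by
    have htend : Tendsto f (𝓝[Ioc t s] t) (𝓝 (f t)) :=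
      ((hd t hs₀t).continuousAt.continuousWithinAt).tendsto
    exact ge_of_tendsto htend (eventually_nhdsWithin_of_forall fun r hr => (hgt r hr).le)
  have hft0 : f t = 0 := le_antisymm hft hge
  have hf't : f' t < 0 := hb t hs₀t hft0
  have hslope : Tendsto (slope f t) (𝓝[Ioc t s] t) (𝓝 (f' t)) :=
    (hasDerivAt_iff_tendsto_slope.1 (hd t hs₀t)).mono_left
      (nhdsWithin_mono _ (fun r hr => ne_of_gt hr.1))
  have hev : ∀ᶠ r in 𝓝[Ioc t s] t, slope f t r < 0 := hslope.eventually_lt_const hf't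
  obtain ⟨r, hrs, hr⟩ := (eventually_mem_nhdsWithin.and hev).exists
  have hneg : f r < 0 := by
    rw [slope_def_field, hft0, sub_zero] at hr
    have hrt : 0 < r - t := sub_pos.2 hrs.1
    rcases div_neg_iff.1 hr with ⟨h1, h2⟩ | ⟨h1, h2⟩ <;> linarith
  exact absurd (hgt r hrs) (not_lt.2 hneg.le)

lemma barrier_reach {f f' : ℝ → ℝ} {s₀ δ : ℝ} (hδ : 0 < δ)
    (hd : ∀ s, s₀ ≤ s → HasDerivAt f (f' s) s)
    (hb : ∀ t, s₀ ≤ t → 0 ≤ f t → f' t ≤ -δ) :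
    ∃ s₁, s₀ ≤ s₁ ∧ ∀ s, s₁ ≤ s → f s ≤ 0 := by
  by_cases hex : ∃ s₁, s₀ ≤ s₁ ∧ f s₁ ≤ 0
  · obtain ⟨s₁, hs₁, hf₁⟩ := hex
    refine ⟨s₁, hs₁, barrier_le (fun s hsx => hd s (hs₁.trans hsx)) hf₁ ?_⟩
    intro u hu hfu
    have := hb u (hs₁.trans hu) hfu.ge
    linarith
  · exfalso
    push_neg at hex
    have hfpos : ∀ u, s₀ ≤ u → 0 < f u := hex
    have hderiv : ∀ x ∈ interior (Ici s₀), deriv f x ≤ -δ := by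
      intro x hx
      rw [interior_Ici] at hx
      have hx' : s₀ ≤ x := le_of_lt hx
      rw [(hd x hx').deriv]
      exact hb x hx' (hfpos x hx').le
    have hanti : AntitoneOn (fun x => f x + δ * x) (Ici s₀) := by
      apply antitoneOn_of_deriv_nonpos (convex_Ici s₀)
      · exact fun x hx => ((hd x hx).continuousAt.continuousWithinAt).add
          (continuous_const.mul continuous_id).continuousWithinAt
      · intro x hx
        rw [interior_Ici] at hx
        exact (((hd x hx.le).add ((hasDerivAt_id x).const_mul δ)).differentiableAt).differentiableWithinAt
      · intro x hx
        rw [interior_Ici] at hx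
        have hder : deriv (fun x => f x + δ * x) x = f' x + δ := by
          have := ((hd x hx.le).add ((hasDerivAt_id x).const_mul δ))
          have h2 := this.deriv
          rw [mul_one] at h2
          exact h2
        rw [hder]
        have := hb x hx.le (hfpos x hx.le).le
        linarith
    set s := s₀ + (f s₀ + 1)/δ with hsdef
    have hs0s : s₀ ≤ s := by
      have : 0 < (f s₀ + 1)/δ := div_pos (by linarith [hfpos s₀ le_rfl]) hδ
      rw [hsdef]; linarith
    have := hanti (self_mem_Ici) hs0s hs0s
    simp only at this
    have hfs : f s ≤ f s₀ + δ * s₀ - δ * s := by linarith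
    have : f s ≤ -1 := by
      rw [hsdef] at hfs
      have : δ * (s₀ + (f s₀ + 1)/δ) = δ * s₀ + (f s₀ + 1) := by
        field_simp
      linarith [hfs, this]
    linarith [hfpos s hs0s]


set_option maxHeartbeats 2000000 in
lemma half_integrable (a μ : ℝ) (ha : 0 < a) (hμ : 1 / 3 < μ)
    (q : ℝ → ℝ) (hq : ContDiff ℝ 2 q)
    (hode : ∀ s : ℝ, deriv (deriv q) s * q s + a * s * deriv q s * q s
      + μ * q s + (1 / 3) * s * deriv q s = 0)
    (hq0' : deriv q 0 = 0)
    (hpos : ∀ s : ℝ, 0 < q s) :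
    IntegrableOn q (Ici 0) := by
  have hμ0 : 0 < μ := lt_trans (by norm_num) hμ
  -- differentiability infrastructure
  have hdiff : Differentiable ℝ q := hq.differentiable (by norm_num)
  have hq1 : ContDiff ℝ 1 (deriv q) := by
    have h := (contDiff_succ_iff_deriv (n := 1)).mp (by exact_mod_cast hq)
    exact h.2.2
  have hdiff' : Differentiable ℝ (deriv q) := hq1.differentiable (by norm_num)
  have hd1 : ∀ s, HasDerivAt q (deriv q s) s := fun s => (hdiff s).hasDerivAt
  have hd2 : ∀ s, HasDerivAt (deriv q) (deriv (deriv q) s) s := fun s => (hdiff' s).hasDerivAt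
  -- Step 1 : deriv q ≤ 0 on [0,∞)
  have step1 : ∀ s, (0:ℝ) ≤ s → deriv q s ≤ 0 := by
    apply barrier_le (f' := deriv (deriv q)) (fun s _ => hd2 s) (le_of_eq hq0')
    intro t ht hft
    have h := hode t
    rw [hft] at h
    have hqt := hpos t
    have h' : deriv (deriv q) t * q t = -μ * q t := by linarith
    have : deriv (deriv q) t = -μ := mul_right_cancel₀ (ne_of_gt hqt) h'
    rw [this]; linarith
  -- q is antitone on [0,∞)
  have hanti : AntitoneOn q (Ici 0) := by
    apply antitoneOn_of_deriv_nonpos (convex_Ici 0) hq.continuous.continuousOn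
      (fun x _ => (hdiff x).differentiableWithinAt)
    intro x hx
    rw [interior_Ici] at hx
    exact step1 x hx.le
  -- Step 3 : q gets arbitrarily small
  have hsmall : ∀ ε : ℝ, 0 < ε → ∃ s₂, 1 ≤ s₂ ∧ ∀ s, s₂ ≤ s → q s ≤ ε := by
    intro ε hε
    by_contra hcon
    push_neg at hcon
    have hLB : ∀ s, 0 ≤ s → ε ≤ q s := by
      intro s hs
      obtain ⟨s', hs', hqs'⟩ := hcon (max s 1) (le_max_right _ _)
      have h1 : q s' ≤ q s := hanti (mem_Ici.2 hs)
        (mem_Ici.2 (hs.trans ((le_max_left s 1).trans hs'))) ((le_max_left s 1).trans hs')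
      linarith
    obtain ⟨c, hcdef⟩ : ∃ c : ℝ, c = a + 1/(3*ε) := ⟨_, rfl⟩
    have hc : 0 < c := by rw [hcdef]; positivity
    obtain ⟨m, hmdef⟩ : ∃ m : ℝ, m = μ/(2*c) := ⟨_, rfl⟩
    have hm : 0 < m := by rw [hmdef]; positivity
    have hmid : a*m + m/(3*ε) = μ/2 := by
      rw [hmdef, hcdef]; field_simp
    have hbf : ∀ t, (1:ℝ) ≤ t → 0 ≤ m * t⁻¹ + deriv q t →
        m * (-(t^2)⁻¹) + deriv (deriv q) t ≤ -(μ/2) := by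
      intro t ht hft
      have ht0 : (0:ℝ) < t := by linarith
      have hd0 : 0 ≤ -deriv q t := by
        have := step1 t (by linarith)
        linarith
      have htd : t * (-deriv q t) ≤ m := by
        have h1 : -deriv q t ≤ m * t⁻¹ := by linarith
        calc t * (-deriv q t) ≤ t * (m * t⁻¹) := by nlinarith
          _ = m := by field_simp
      have hQ : ε ≤ q t := hLB t ht0.le
      have hQ0 : 0 < q t := hpos t
      have hodet : deriv (deriv q) t * q t
          = a*t*(-deriv q t)*(q t) - μ*(q t) + (1/3)*(t*(-deriv q t)) := by
        have := hode t
        ring_nf; ring_nf at this; linarith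
      have hmid2 : (a*m + m/(3*ε)) * q t = μ/2 * q t := by rw [hmid]
      have hmε : m/(3*ε)*ε = m/3 := by field_simp
      have key : a*t*(-deriv q t)*(q t) + (1/3)*(t*(-deriv q t)) ≤ (μ/2) * q t := by
        nlinarith [mul_nonneg (mul_nonneg ha.le (sub_nonneg.2 htd)) hQ0.le,
          mul_nonneg (div_nonneg hm.le (by positivity : (0:ℝ) ≤ 3*ε)) (sub_nonneg.2 hQ),
          hmid2, hmε, htd]
      have hq'' : deriv (deriv q) t ≤ -(μ/2) := by
        have h4 : deriv (deriv q) t * q t ≤ -(μ/2) * q t := by nlinarith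
        exact le_of_mul_le_mul_right (by linarith [h4]) hQ0
      nlinarith [mul_pos hm (inv_pos.2 (pow_pos ht0 2))]
    obtain ⟨s₁, hs₁1, hs₁⟩ := barrier_reach (f := fun s => m * s⁻¹ + deriv q s)
      (f' := fun s => m * (-(s^2)⁻¹) + deriv (deriv q) s)
      (by positivity : (0:ℝ) < μ/2)
      (fun s hs => ((hasDerivAt_inv (by positivity : s ≠ 0)).const_mul m).add (hd2 s))
      hbf
    have hs₁0 : (0:ℝ) < s₁ := by linarith
    have hG : ∀ x, s₁ ≤ x → HasDerivAt (fun s => q s + m * Real.log s)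
        (deriv q x + m * x⁻¹) x := by
      intro x hx
      have hx0 : (0:ℝ) < x := lt_of_lt_of_le hs₁0 hx
      exact (hd1 x).add ((Real.hasDerivAt_log (ne_of_gt hx0)).const_mul m)
    have hGanti : AntitoneOn (fun s => q s + m * Real.log s) (Ici s₁) := by
      apply antitoneOn_of_deriv_nonpos (convex_Ici s₁)
      · exact fun x hx => (hG x hx).continuousAt.continuousWithinAt
      · intro x hx
        rw [interior_Ici] at hx
        exact (hG x hx.le).differentiableAt.differentiableWithinAt
      · intro x hx
        rw [interior_Ici] at hx
        rw [(hG x hx.le).deriv]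
        have := hs₁ x hx.le
        linarith
    obtain ⟨T, hTdef⟩ : ∃ T : ℝ, T = s₁ * Real.exp (q s₁ / m + 1) := ⟨_, rfl⟩
    have hexp1 : (1:ℝ) ≤ Real.exp (q s₁ / m + 1) := by
      rw [← Real.exp_zero]
      apply Real.exp_le_exp.2
      have := hpos s₁
      positivity
    have hsT : s₁ ≤ T := by rw [hTdef]; nlinarith
    have hGT := hGanti (self_mem_Ici) (mem_Ici.2 hsT) hsT
    simp only at hGT
    have hlogT : Real.log T = Real.log s₁ + (q s₁ / m + 1) := by
      rw [hTdef, Real.log_mul (ne_of_gt hs₁0) (Real.exp_ne_zero _), Real.log_exp]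
    have hmq : m * (q s₁ / m) = q s₁ := by field_simp
    have : q T ≤ -m := by
      rw [hlogT] at hGT
      nlinarith [hGT, hmq]
    linarith [hpos T]
  -- Step 4 : eventually s*q' + k*q ≤ 0
  obtain ⟨k, hkdef⟩ : ∃ k : ℝ, k = (1 + 3*μ)/2 := ⟨_, rfl⟩
  have hk1 : 1 < k := by rw [hkdef]; linarith
  have hk3 : k < 3*μ := by rw [hkdef]; linarith
  have hk0 : 0 < k := by linarith
  have hgap : 0 < μ - k/3 := by linarith
  obtain ⟨ε, hεdef⟩ : ∃ ε : ℝ, ε = (μ - k/3)/(2*(a*k)) := ⟨_, rfl⟩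
  have hε : 0 < ε := by rw [hεdef]; positivity
  have hεid : a*k*ε = (μ - k/3)/2 := by rw [hεdef]; field_simp
  obtain ⟨s₂, hs₂1, hs₂⟩ := hsmall ε hε
  have hs₂0 : (0:ℝ) < s₂ := by linarith
  have hδ : 0 < s₂*(μ - k/3)/2 := by positivity
  have hbv : ∀ t, s₂ ≤ t → 0 ≤ t * deriv q t + k * q t →
      (1 * deriv q t + t * deriv (deriv q) t) + k * deriv q t ≤ -(s₂*(μ - k/3)/2) := by
    intro t hts₂ hv
    have ht0 : (0:ℝ) < t := lt_of_lt_of_le hs₂0 hts₂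
    have hd0 : 0 ≤ -deriv q t := by
      have := step1 t ht0.le
      linarith
    have hQ0 : 0 < q t := hpos t
    have hQ : q t ≤ ε := hs₂ t hts₂
    have htd : t * (-deriv q t) ≤ k * q t := by linarith
    have hodet : deriv (deriv q) t * q t
        = a*t*(-deriv q t)*(q t) - μ*(q t) + (1/3)*(t*(-deriv q t)) := by
      have := hode t
      ring_nf; ring_nf at this; linarith
    have hodett : t * (deriv (deriv q) t * q t)
        = t * (a*t*(-deriv q t)*(q t) - μ*(q t) + (1/3)*(t*(-deriv q t))) := by
      rw [hodet]
    have hE : a*k*ε*(t*q t) = (μ - k/3)/2*(t*q t) := by rw [hεid]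
    have H : ((1 * deriv q t + t * deriv (deriv q) t) + k * deriv q t) * q t
        ≤ -(s₂*(μ - k/3)/2) * q t := by
      nlinarith [hodett, hE,
        mul_nonneg (mul_nonneg (mul_nonneg ha.le ht0.le) (sub_nonneg.2 htd)) hQ0.le,
        mul_nonneg (mul_nonneg (mul_nonneg (mul_nonneg ha.le hk0.le) ht0.le) hQ0.le)
          (sub_nonneg.2 hQ),
        mul_nonneg ht0.le (sub_nonneg.2 htd),
        mul_nonneg (mul_nonneg (by linarith : (0:ℝ) ≤ k+1) hd0) hQ0.le,
        mul_nonneg (mul_nonneg (sub_nonneg.2 hts₂) hgap.le) hQ0.le]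
    exact le_of_mul_le_mul_right H hQ0
  obtain ⟨s₃, hs₃2, hs₃⟩ := barrier_reach (f := fun s => s * deriv q s + k * q s)
    (f' := fun s => (1 * deriv q s + s * deriv (deriv q) s) + k * deriv q s)
    hδ
    (fun s _ => ((hasDerivAt_id s).mul (hd2 s)).add ((hd1 s).const_mul k))
    hbv
  have hs₃0 : (0:ℝ) < s₃ := lt_of_lt_of_le hs₂0 hs₃2
  -- Step 5 : q s ≤ C * s^(-k) on [s₃,∞)
  have hH : ∀ x, s₃ ≤ x → HasDerivAt (fun s => q s * s ^ k)
      (deriv q x * x ^ k + q x * (k * x ^ (k-1))) x := by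
    intro x hx
    have hx0 : (0:ℝ) < x := lt_of_lt_of_le hs₃0 hx
    exact (hd1 x).mul (Real.hasDerivAt_rpow_const (Or.inl (ne_of_gt hx0)))
  have hHanti : AntitoneOn (fun s => q s * s ^ k) (Ici s₃) := by
    apply antitoneOn_of_deriv_nonpos (convex_Ici s₃)
    · exact fun x hx => (hH x hx).continuousAt.continuousWithinAt
    · intro x hx
      rw [interior_Ici] at hx
      exact (hH x hx.le).differentiableAt.differentiableWithinAt
    · intro x hx
      rw [interior_Ici] at hx
      rw [(hH x hx.le).deriv]
      have hx0 : (0:ℝ) < x := lt_of_lt_of_le hs₃0 hx.le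
      have hxk : x ^ k = x ^ (k-1) * x := by
        conv_lhs => rw [show k = (k-1)+1 by ring]
        rw [Real.rpow_add_one (ne_of_gt hx0)]
      have hvx : x * deriv q x + k * q x ≤ 0 := hs₃ x hx.le
      have hfact : deriv q x * x ^ k + q x * (k * x ^ (k-1))
          = x ^ (k-1) * (x * deriv q x + k * q x) := by
        rw [hxk]; ring
      rw [hfact]
      exact mul_nonpos_of_nonneg_of_nonpos (Real.rpow_nonneg hx0.le _) hvx
  have hbound : ∀ x, s₃ ≤ x → q x ≤ (q s₃ * s₃ ^ k) * x ^ (-k) := by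
    intro x hx
    have hx0 : (0:ℝ) < x := lt_of_lt_of_le hs₃0 hx
    have h1 : q x * x ^ k ≤ q s₃ * s₃ ^ k := hHanti self_mem_Ici (mem_Ici.2 hx) hx
    have hxk : (0:ℝ) < x ^ k := Real.rpow_pos_of_pos hx0 _
    rw [Real.rpow_neg hx0.le, ← div_eq_mul_inv]
    rw [le_div_iff₀ hxk]
    exact h1
  -- integrability
  have hIcc : IntegrableOn q (Icc 0 s₃) := hq.continuous.continuousOn.integrableOn_Icc
  have hIoi : IntegrableOn q (Ioi s₃) := by
    have hint3 : IntegrableOn (fun s : ℝ => (q s₃ * s₃ ^ k) * s ^ (-k)) (Ioi s₃) :=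
      (integrableOn_Ioi_rpow_of_lt (by linarith : -k < -1) hs₃0).const_mul _
    apply hint3.mono' (hq.continuous.aestronglyMeasurable.restrict)
    rw [ae_restrict_iff' measurableSet_Ioi]
    filter_upwards with x hx
    rw [Real.norm_eq_abs, abs_of_pos (hpos x)]
    exact hbound x (le_of_lt hx)
  apply (hIcc.union hIoi).mono_set
  intro x hx
  rcases le_or_gt x s₃ with h | h
  · exact Or.inl ⟨hx, h⟩
  · exact Or.inr h


set_option maxHeartbeats 1000000 in
theorem stmt_6 (a μ A : ℝ) (ha : 0 < a) (hμ : 1 / 3 < μ) (hA : 0 < A)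
    (q : ℝ → ℝ) (hq : ContDiff ℝ 2 q)
    (hode : ∀ s : ℝ, deriv (deriv q) s * q s + a * s * deriv q s * q s
      + μ * q s + (1 / 3) * s * deriv q s = 0)
    (hq0 : q 0 = A) (hq0' : deriv q 0 = 0)
    (hpos : ∀ s : ℝ, 0 < q s) :
    Integrable q := by
  have hIci : IntegrableOn q (Ici 0) := half_integrable a μ ha hμ q hq hode hq0' hpos
  -- the reflected function satisfies the same hypotheses
  have hQc : ContDiff ℝ 2 (fun s : ℝ => q (-s)) := hq.comp contDiff_id.neg
  have hdQ : deriv (fun s : ℝ => q (-s)) = fun s => -deriv q (-s) := by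
    funext s
    exact deriv_comp_neg q s
  have hdQ2 : deriv (deriv (fun s : ℝ => q (-s))) = fun s => deriv (deriv q) (-s) := by
    funext s
    rw [hdQ]
    have : deriv (fun s : ℝ => -deriv q (-s)) s = -deriv (fun s : ℝ => deriv q (-s)) s :=
      deriv.neg
    rw [this, deriv_comp_neg (deriv q) s, neg_neg]
  have hodeQ : ∀ s : ℝ, deriv (deriv (fun s : ℝ => q (-s))) s * (fun s : ℝ => q (-s)) s
      + a * s * deriv (fun s : ℝ => q (-s)) s * (fun s : ℝ => q (-s)) s
      + μ * (fun s : ℝ => q (-s)) s + (1 / 3) * s * deriv (fun s : ℝ => q (-s)) s = 0 := by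
    intro s
    rw [hdQ2, hdQ]
    simp only
    have := hode (-s)
    ring_nf
    ring_nf at this
    linarith
  have hQ0' : deriv (fun s : ℝ => q (-s)) 0 = 0 := by
    rw [hdQ]; simp [hq0']
  have hQIci : IntegrableOn (fun s : ℝ => q (-s)) (Ici 0) :=
    half_integrable a μ ha hμ _ hQc hodeQ hQ0' (fun s => hpos (-s))
  have hIic : IntegrableOn q (Iic 0) := by
    have hiff := MeasurePreserving.integrableOn_comp_preimage
      (Measure.measurePreserving_neg (volume : Measure ℝ))
      (Homeomorph.neg ℝ).measurableEmbedding (f := q) (s := Iic 0)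
    have hpre : (fun x : ℝ => -x) ⁻¹' (Iic 0) = Ici 0 := by
      ext x; simp
    rw [hpre] at hiff
    exact hiff.1 hQIci
  have hU : IntegrableOn q (Iic 0 ∪ Ici 0) := hIic.union hIci
  rw [Iic_union_Ici] at hU
  rwa [← integrableOn_univ]
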